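/- arXiv:2003.05906 — 4 statements merged into one kernel-verified Lean document; each statement's English description precedes it below -/
import Mathlib

section
/- The determinant of the K×K matrix whose (i,j) entry is the binomial coefficient C(2j+i-2, K-1) (with the convention that C(n,m)=0 when m>n) equals (-2)^(K(K-1)/2). -/
open Finset Matrix Polynomial

/-- Determinant of the binomial matrix `C(v i, j)` times the product of factorials equals the
Vandermonde determinant of `v`. -/
lemma aux_choose_det {n : ℕ} (v : Fin n → ℕ) :
    (∏ i : Fin n, (Nat.factorial i : ℤ)) *
      (Matrix.of fun i j : Fin n => ((v i).choose (j : ℕ) : ℤ)).det =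
    (Matrix.vandermonde fun i : Fin n => ((v i : ℤ))).det := by
  have h := Matrix.det_eval_matrixOfPolynomials_eq_det_vandermonde
      (fun i : Fin n => ((v i : ℤ))) (fun i => descPochhammer ℤ i)
      (fun i => descPochhammer_natDegree ℤ i)
      (fun i => monic_descPochhammer ℤ i)
  rw [h]
  have : (Matrix.of fun i j : Fin n => (descPochhammer ℤ (j : ℕ)).eval ((v i : ℤ))) =
      Matrix.of fun i j : Fin n =>
        ((Nat.factorial (j : ℕ) : ℤ)) * ((v i).choose (j : ℕ) : ℤ) := by
    ext i j
    rw [Matrix.of_apply, Matrix.of_apply, descPochhammer_eval_eq_descFactorial ℤ _ _]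
    exact_mod_cast congrArg (Nat.cast : ℕ → ℤ)
      (Nat.descFactorial_eq_factorial_mul_choose (v i) (j : ℕ))
  rw [this]
  exact (Matrix.det_mul_row (fun j : Fin n => (Nat.factorial (j : ℕ) : ℤ))
    (Matrix.of fun i j : Fin n => ((v i).choose (j : ℕ) : ℤ))).symm

lemma aux_prod_fact (n : ℕ) :
    (Matrix.vandermonde fun i : Fin n => ((i : ℤ))).det
      = ∏ i : Fin n, (Nat.factorial i : ℤ) := by
  cases n with
  | zero => simp
  | succ m =>
    rw [Matrix.det_vandermonde_id_eq_superFactorial (R := ℤ) m]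
    rw [Fin.prod_univ_eq_prod_range (fun i => ((Nat.factorial i : ℤ)))]
    rw [← Nat.cast_prod, Nat.prod_range_succ_factorial]

/-- Determinant of the anti-diagonal 0-1 matrix. -/
lemma aux_det_J : ∀ n : ℕ,
    (Matrix.of fun m k : Fin n => if m = Fin.rev k then (1 : ℤ) else 0).det
      = (-1) ^ (n * (n - 1) / 2)
  | 0 => by simp
  | (n + 1) => by
    rw [Matrix.det_succ_row_zero]
    have hterm : ∀ j : Fin (n + 1), j ≠ Fin.last n →
        (-1 : ℤ) ^ (j : ℕ) *
          (Matrix.of fun m k : Fin (n + 1) => if m = Fin.rev k then (1 : ℤ) else 0) 0 j *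
          (((Matrix.of fun m k : Fin (n + 1) => if m = Fin.rev k then (1 : ℤ) else 0)).submatrix
            Fin.succ j.succAbove).det = 0 := by
      intro j hj
      have : (0 : Fin (n + 1)) ≠ Fin.rev j := by
        intro h
        apply hj
        have := congrArg Fin.rev h
        simpa using this.symm
      simp [Matrix.of_apply, if_neg this]
    rw [Finset.sum_eq_single (Fin.last n) (fun j _ => hterm j) (by simp)]
    have h0 : (0 : Fin (n + 1)) = Fin.rev (Fin.last n) := by simp
    rw [Matrix.of_apply, if_pos h0]
    have hsub : ((Matrix.of fun m k : Fin (n + 1) =>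
        if m = Fin.rev k then (1 : ℤ) else 0)).submatrix Fin.succ (Fin.last n).succAbove
        = Matrix.of fun m k : Fin n => if m = Fin.rev k then (1 : ℤ) else 0 := by
      ext m k
      simp only [Matrix.submatrix_apply, Matrix.of_apply, Fin.succAbove_last]
      rw [Fin.rev_castSucc]
      simp [Fin.succ_inj]
    rw [hsub, aux_det_J n, Fin.val_last, mul_one, ← pow_add]
    congr 1
    have hnn : (n + 1) * (n + 1 - 1) = n * (n - 1) + 2 * n := by
      cases n with
      | zero => rfl
      | succ m => simp [Nat.succ_sub_one]; ring
    omega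

lemma aux_exp (K : ℕ) : ∑ i : Fin K, (K - 1 - (i : ℕ)) = K * (K - 1) / 2 := by
  rw [Fin.sum_univ_eq_sum_range (fun i => K - 1 - i)]
  rw [Finset.sum_range_reflect (fun i => i) K]
  exact Finset.sum_range_id K

theorem binom_det_eq_neg_two_pow (K : ℕ) (hK : 0 < K) :
    (Matrix.of fun i j : Fin K =>
        ((2 * (j : ℕ) + (i : ℕ) + 1).choose (K - 1) : ℤ)).det =
      (-2) ^ (K * (K - 1) / 2) := by
  set F : ℤ := ∏ i : Fin K, (Nat.factorial i : ℤ) with hF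
  have hFne : F ≠ 0 := by
    rw [hF]
    exact Finset.prod_ne_zero_iff.mpr fun i _ => by
      exact_mod_cast (Nat.factorial_pos (i : ℕ)).ne'
  set L : Matrix (Fin K) (Fin K) ℤ :=
    Matrix.of fun i k : Fin K => (((i : ℕ) + 1).choose (k : ℕ) : ℤ) with hL
  set J : Matrix (Fin K) (Fin K) ℤ :=
    Matrix.of fun m k : Fin K => if m = Fin.rev k then (1 : ℤ) else 0 with hJ
  set R : Matrix (Fin K) (Fin K) ℤ :=
    Matrix.of fun k j : Fin K => ((2 * (j : ℕ)).choose (k : ℕ) : ℤ) with hR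
  -- the factorization M = L * J * R
  have hfact : (Matrix.of fun i j : Fin K =>
      ((2 * (j : ℕ) + (i : ℕ) + 1).choose (K - 1) : ℤ)) = L * (J * R) := by
    ext i j
    rw [Matrix.mul_apply]
    have hJR : ∀ k : Fin K, (J * R) k j = ((2 * (j : ℕ)).choose ((Fin.rev k : Fin K) : ℕ) : ℤ) := by
      intro k
      rw [Matrix.mul_apply]
      rw [Finset.sum_eq_single (Fin.rev k)
        (fun m _ hm => by
          rw [hJ, Matrix.of_apply, if_neg (fun h => hm (by rw [h, Fin.rev_rev])), zero_mul])
        (by simp)]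
      rw [hJ, Matrix.of_apply, if_pos (Fin.rev_rev k).symm, one_mul, hR, Matrix.of_apply]
    simp only [hJR, hL, Matrix.of_apply]
    have hvand : ((2 * (j : ℕ) + (i : ℕ) + 1).choose (K - 1) : ℤ)
        = ∑ k ∈ Finset.range K, ((((i : ℕ) + 1).choose k : ℤ) *
            (((2 * (j : ℕ)).choose (K - 1 - k) : ℤ))) := by
      have : 2 * (j : ℕ) + (i : ℕ) + 1 = ((i : ℕ) + 1) + 2 * (j : ℕ) := by ring
      rw [this, Nat.add_choose_eq,
        Finset.Nat.sum_antidiagonal_eq_sum_range_succ_mk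
          (fun ij => ((i : ℕ) + 1).choose ij.1 * (2 * (j : ℕ)).choose ij.2) (K - 1)]
      have hK1 : (K - 1).succ = K := Nat.succ_pred_eq_of_pos hK
      rw [hK1]
      push_cast
      rfl
    rw [hvand, ← Fin.sum_univ_eq_sum_range]
    refine Finset.sum_congr rfl fun k _ => ?_
    have hk : ((Fin.rev k : Fin K) : ℕ) = K - 1 - (k : ℕ) := by
      rw [Fin.val_rev]; omega
    rw [hk]
  -- determinant of L
  have hdetL : L.det = 1 := by
    have h := aux_choose_det (fun i : Fin K => (i : ℕ) + 1)
    have hv : (Matrix.vandermonde fun i : Fin K => (((i : ℕ) + 1 : ℕ) : ℤ)).det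
        = (Matrix.vandermonde fun i : Fin K => ((i : ℤ))).det := by
      have : (fun i : Fin K => (((i : ℕ) + 1 : ℕ) : ℤ)) = fun i : Fin K => ((i : ℤ)) + 1 := by
        funext i; push_cast; ring
      rw [this, Matrix.det_vandermonde_add]
    rw [hv, aux_prod_fact, ← hF] at h
    have : F * L.det = F * 1 := by rw [mul_one]; exact h
    exact mul_left_cancel₀ hFne this
  -- determinant of R
  have hdetR : R.det = 2 ^ (K * (K - 1) / 2) := by
    have h := aux_choose_det (fun j : Fin K => 2 * (j : ℕ))
    have hRt : (Matrix.of fun i j : Fin K => (((fun j : Fin K => 2 * (j : ℕ)) i).choose (j : ℕ) : ℤ)) = Rᵀ := by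
      ext a b; simp [hR, Matrix.transpose_apply]
    rw [hRt, Matrix.det_transpose, ← hF] at h
    have hv2 : (Matrix.vandermonde fun j : Fin K => ((2 * (j : ℕ) : ℕ) : ℤ)).det
        = 2 ^ (K * (K - 1) / 2) * F := by
      rw [Matrix.det_vandermonde]
      have : ∀ i : Fin K, ∀ j ∈ Finset.Ioi i,
          (((2 * (j : ℕ) : ℕ) : ℤ) - ((2 * (i : ℕ) : ℕ) : ℤ)) = 2 * (((j : ℤ)) - ((i : ℤ))) := by
        intro i j _; push_cast; ring
      rw [Finset.prod_congr rfl fun i _ => Finset.prod_congr rfl (this i)]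
      simp only [Finset.prod_mul_distrib, Finset.prod_const]
      have hcard : ∏ i : Fin K, (2 : ℤ) ^ (Finset.Ioi i).card = 2 ^ (K * (K - 1) / 2) := by
        rw [Finset.prod_pow_eq_pow_sum]
        congr 1
        rw [← aux_exp K]
        exact Finset.sum_congr rfl fun i _ => Fin.card_Ioi i
      rw [hcard]
      congr 1
      rw [hF, ← aux_prod_fact K, Matrix.det_vandermonde]
    rw [hv2] at h
    have h2 : F * R.det = F * 2 ^ (K * (K - 1) / 2) := by rw [h]; ring
    exact mul_left_cancel₀ hFne h2
  rw [hfact, Matrix.det_mul, Matrix.det_mul, hdetL, hdetR, aux_det_J K, one_mul,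
    ← mul_pow]
  norm_num
end

section
/- For n a positive integer and m ∈ {0,1,2}, the determinant of the n×n matrix whose (i,j) entry is the binomial coefficient C(2j-m, n-i) equals (-2)^(n(n-1)/2), independent of m. -/
open Equiv Equiv.Perm

theorem revPerm_decompose : ∀ (n : ℕ),
    (Fin.revPerm : Equiv.Perm (Fin (n+1))) =
      Equiv.Perm.decomposeFin.symm (Fin.last n, (finRotate n)⁻¹ * Fin.revPerm)
  | 0 => by decide
  | (n+1) => by
    ext i
    refine Fin.cases ?_ (fun x => ?_) i
    · simp
    · rw [Equiv.Perm.decomposeFin_symm_apply_succ]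
      simp only [Equiv.Perm.mul_apply, Fin.revPerm_apply]
      rcases eq_or_ne x (Fin.last n) with rfl | hx
      · rw [Fin.rev_last]
        have h0 : (finRotate (n+1))⁻¹ 0 = Fin.last n := by
          rw [Equiv.Perm.inv_def, Equiv.symm_apply_eq, finRotate_succ_apply, Fin.last_add_one]
        rw [h0, Fin.succ_last, Equiv.swap_apply_right]
        simp [Fin.val_rev]
      · have hxv : (x : ℕ) < n :=
          lt_of_le_of_ne (Nat.lt_succ_iff.mp x.isLt) (fun h => hx (Fin.ext h))
        have h1 : (finRotate (n+1))⁻¹ x.rev = ⟨n - (x : ℕ) - 1, by omega⟩ := by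
          rw [Equiv.Perm.inv_def, Equiv.symm_apply_eq, finRotate_succ_apply]
          ext
          rw [Fin.val_add_one_of_lt (by simp [Fin.lt_iff_val_lt_val, Fin.val_last]; omega)]
          simp [Fin.val_rev]
          omega
        rw [h1, Equiv.swap_apply_of_ne_of_ne]
        · simp [Fin.val_succ, Fin.val_rev]
          omega
        · simp [Fin.ext_iff]
        · simp [Fin.ext_iff, Fin.val_succ, Fin.val_last]
          omega

theorem sign_revPerm : ∀ n : ℕ,
    Equiv.Perm.sign (Fin.revPerm : Equiv.Perm (Fin n)) = (-1) ^ (n * (n-1) / 2)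
  | 0 => by decide
  | 1 => by decide
  | (n+2) => by
    have hlast : Fin.last (n+1) ≠ 0 := by simp [Fin.ext_iff]
    rw [revPerm_decompose (n+1), Equiv.Perm.decomposeFin.symm_sign,
      if_neg hlast, map_mul, map_inv, sign_finRotate,
      sign_revPerm (n+1)]
    have h : (n+2) * (n+2-1) / 2 = (n+1) * (n+1-1) / 2 + (n+1) := by
      show (n+2)*(n+1)/2 = (n+1)*n/2 + (n+1)
      rw [show (n+2) * (n+1) = (n+1) * n + (n+1) * 2 by ring,
        Nat.add_mul_div_right _ _ (by norm_num)]
    rw [h, pow_add]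
    simp [pow_succ, pow_add]
    group

open Equiv Equiv.Perm Finset

theorem sf_pos (n : ℕ) : 0 < Nat.superFactorial n := by
  induction n with
  | zero => exact Nat.one_pos
  | succ k ih => exact Nat.mul_pos (Nat.factorial_pos _) ih

theorem my_matrixOf_eval {n : ℕ} (v : Fin n → ℕ) :
    (Matrix.of (fun (i j : Fin n) => (descPochhammer ℤ j).eval (v i : ℤ))).det =
    (∏ i : Fin n, Nat.factorial i) *
      (Matrix.of (fun (i j : Fin n) => (Nat.choose (v i) (j : ℕ) : ℤ))).det := by
  convert Matrix.det_mul_row (fun (i : Fin n) => ((Nat.factorial (i : ℕ)) : ℤ)) _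
  · rw [Matrix.of_apply, descPochhammer_eval_eq_descFactorial ℤ _ _]
    congr
    exact Nat.descFactorial_eq_factorial_mul_choose _ _
  · rw [Nat.cast_prod]

theorem choose_matrix_det (k : ℕ) (c : ℕ) :
    (Matrix.of (fun (i j : Fin (k+1)) => (Nat.choose (2 * i + c) (j : ℕ) : ℤ))).det =
      2 ^ ((k+1) * k / 2) := by
  have hvd := Matrix.det_eval_matrixOfPolynomials_eq_det_vandermonde
    (fun i : Fin (k+1) => ((2 * (i : ℕ) + c : ℕ) : ℤ)) (fun i => descPochhammer ℤ i)
    (fun i => descPochhammer_natDegree ℤ i) (fun i => monic_descPochhammer ℤ i)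
  rw [my_matrixOf_eval] at hvd
  have hv : (Matrix.vandermonde (fun i : Fin (k+1) => ((2 * (i : ℕ) + c : ℕ) : ℤ))).det =
      2 ^ ((k+1) * k / 2) * (Nat.superFactorial k : ℤ) := by
    rw [Matrix.det_vandermonde]
    have h1 : ∀ i : Fin (k+1), ∀ j ∈ Ioi i,
        ((2 * (j : ℕ) + c : ℕ) : ℤ) - ((2 * (i : ℕ) + c : ℕ) : ℤ)
          = 2 * (((j : ℕ) : ℤ) - ((i : ℕ) : ℤ)) := by
      intro i j _
      push_cast
      ring
    rw [Finset.prod_congr rfl (fun i _ => Finset.prod_congr rfl (h1 i))]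
    simp_rw [Finset.prod_mul_distrib, Finset.prod_const]
    rw [Finset.prod_pow_eq_pow_sum]
    have h2 : ∑ i : Fin (k+1), #(Ioi i) = (k+1) * k / 2 := by
      simp_rw [Fin.card_Ioi]
      rw [Fin.sum_univ_eq_sum_range (fun i => k + 1 - 1 - i)]
      simp only [Nat.add_sub_cancel]
      have h3 : ∑ i ∈ range (k+1), (k - i) = ∑ i ∈ range (k+1), i := by
        rw [← Finset.sum_range_reflect]
        exact Finset.sum_congr rfl (fun i hi => by
          simp only [Finset.mem_range] at hi; omega)
      have h4 : (∑ i ∈ range (k+1), i) * 2 = (k+1) * k := by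
        simpa using Finset.sum_range_id_mul_two (k+1)
      omega
    rw [h2]
    congr 1
    have := Matrix.det_vandermonde_id_eq_superFactorial (R := ℤ) k
    rw [Matrix.det_vandermonde] at this
    rw [← this]
  rw [hv] at hvd
  have hsf : (∏ i : Fin (k+1), Nat.factorial i) = Nat.superFactorial k := by
    rw [Fin.prod_univ_eq_prod_range (fun i => Nat.factorial i)]
    exact Nat.prod_range_succ_factorial k
  rw [hsf] at hvd
  have hne : (Nat.superFactorial k : ℤ) ≠ 0 := by
    exact_mod_cast (sf_pos k).ne'
  have := hvd.symm
  rw [mul_comm] at this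
  exact mul_right_cancel₀ hne this

theorem binom_det_general (n : ℕ) (hn : 0 < n) (m : ℕ) (hm : m ≤ 2) :
    (Matrix.of fun i j : Fin n =>
        ((2 * (j : ℕ) + 2 - m).choose (n - 1 - (i : ℕ)) : ℤ)).det =
      (-2) ^ (n * (n - 1) / 2) := by
  obtain ⟨k, rfl⟩ : ∃ k, n = k + 1 := ⟨n - 1, by omega⟩
  have hexp : (k + 1) * (k + 1 - 1) / 2 = (k + 1) * k / 2 := by simp
  rw [hexp]
  have hB := choose_matrix_det k (2 - m)
  set B := Matrix.of (fun (i j : Fin (k+1)) => (Nat.choose (2 * i + (2 - m)) (j : ℕ) : ℤ)) with hBdef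
  have hA : (Matrix.of fun i j : Fin (k+1) =>
        ((2 * (j : ℕ) + 2 - m).choose (k + 1 - 1 - (i : ℕ)) : ℤ))
      = B.transpose.submatrix (Fin.revPerm) id := by
    ext i j
    simp only [Matrix.of_apply, Matrix.transpose_apply, hBdef, Matrix.submatrix_apply,
      Fin.revPerm_apply, id_eq]
    have h1 : 2 * (j : ℕ) + 2 - m = 2 * (j : ℕ) + (2 - m) := by omega
    have h2 : k + 1 - 1 - (i : ℕ) = (Fin.rev i : ℕ) := by rw [Fin.val_rev]; omega
    rw [h1, h2]
  rw [hA, Matrix.det_permute, Matrix.det_transpose, hB, sign_revPerm]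
  rw [hexp]
  push_cast
  rw [← neg_one_mul (2 : ℤ), mul_pow]
end

section
/- The determinant of the K×K lower-Hessenberg Toeplitz matrix T with entries T_{i,j} = 1/(j+1-i)! if i ≤ j+1 and 0 otherwise equals 1/K!. -/
open Finset

private lemma alt_sum_choose (n m : ℕ) :
    ∑ k ∈ Finset.range (m + 1), (-1 : ℚ) ^ k * ((n + 1).choose k) =
      (-1 : ℚ) ^ m * (n.choose m) := by
  induction m with
  | zero => simp
  | succ m ih =>
      rw [Finset.sum_range_succ, ih, Nat.choose_succ_succ]
      push_cast
      ring

private lemma mul_entry (K i j : ℕ) (hi : i < K) (hj : j < K) :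
    ∑ k ∈ Finset.range K,
      (if k ≤ i then ((-1 : ℚ) ^ (i + k) * i.factorial / k.factorial) else 0) *
      (if k ≤ j + 1 then (1 : ℚ) / (j + 1 - k).factorial else 0)
    = (-1 : ℚ) ^ (i + min i (j + 1)) * i.factorial * (j.choose (min i (j + 1))) /
        (j + 1).factorial := by
  set m := min i (j + 1) with hm
  have hmK : m + 1 ≤ K := by omega
  rw [← Finset.sum_subset (Finset.range_subset_range.mpr hmK)]
  · have hcong : ∀ k ∈ Finset.range (m + 1),
        (if k ≤ i then ((-1 : ℚ) ^ (i + k) * i.factorial / k.factorial) else 0) *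
        (if k ≤ j + 1 then (1 : ℚ) / (j + 1 - k).factorial else 0)
        = ((-1 : ℚ) ^ i * i.factorial / (j + 1).factorial) *
            ((-1 : ℚ) ^ k * ((j + 1).choose k)) := by
      intro k hk
      rw [Finset.mem_range] at hk
      have hki : k ≤ i := by omega
      have hkj : k ≤ j + 1 := by omega
      rw [if_pos hki, if_pos hkj]
      rw [Nat.cast_choose ℚ hkj]
      have h1 : ((k.factorial : ℚ)) ≠ 0 := by positivity
      have h2 : (((j + 1 - k).factorial : ℚ)) ≠ 0 := by positivity
      have h3 : (((j + 1).factorial : ℚ)) ≠ 0 := by positivity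
      field_simp
      ring
    rw [Finset.sum_congr rfl hcong, ← Finset.mul_sum, alt_sum_choose j m]
    ring
  · intro k hk hk'
    rw [Finset.mem_range] at hk
    rw [Finset.mem_range, not_lt] at hk'
    have : ¬ k ≤ i ∨ ¬ k ≤ j + 1 := by omega
    rcases this with h | h
    · rw [if_neg h, zero_mul]
    · rw [if_neg h, mul_zero]

private lemma prod_inv_factorial (n : ℕ) :
    ∏ i ∈ Finset.range n, (1 / ((i : ℚ) + 1)) = 1 / (Nat.factorial n) := by
  induction n with
  | zero => simp
  | succ n ih =>
      rw [Finset.prod_range_succ, ih, Nat.factorial_succ]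
      push_cast
      rw [div_mul_div_comm, one_mul]
      ring_nf

theorem toeplitz_det_eq_inv_factorial (K : ℕ) (hK : 0 < K) :
    (Matrix.of fun i j : Fin K =>
        if (i : ℕ) ≤ (j : ℕ) + 1 then
          (1 : ℚ) / (Nat.factorial ((j : ℕ) + 1 - (i : ℕ)))
        else 0).det = 1 / (Nat.factorial K) := by
  set T : Matrix (Fin K) (Fin K) ℚ := Matrix.of fun i j : Fin K =>
      if (i : ℕ) ≤ (j : ℕ) + 1 then
        (1 : ℚ) / (Nat.factorial ((j : ℕ) + 1 - (i : ℕ)))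
      else 0 with hT
  set L : Matrix (Fin K) (Fin K) ℚ := Matrix.of fun i k : Fin K =>
      if (k : ℕ) ≤ (i : ℕ) then
        ((-1 : ℚ) ^ ((i : ℕ) + (k : ℕ)) * Nat.factorial i / Nat.factorial k)
      else 0 with hL
  -- entries of L * T
  have hmul : ∀ i j : Fin K, (L * T) i j =
      (-1 : ℚ) ^ ((i : ℕ) + min (i : ℕ) ((j : ℕ) + 1)) * Nat.factorial i *
        ((j : ℕ).choose (min (i : ℕ) ((j : ℕ) + 1))) / Nat.factorial ((j : ℕ) + 1) := by
    intro i j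
    have step1 : (L * T) i j = ∑ k ∈ Finset.range K,
        (if k ≤ (i:ℕ) then ((-1 : ℚ) ^ ((i:ℕ) + k) * Nat.factorial i / Nat.factorial k) else 0) *
        (if k ≤ (j:ℕ) + 1 then (1 : ℚ) / (Nat.factorial ((j:ℕ) + 1 - k)) else 0) := by
      rw [Matrix.mul_apply,
        ← Fin.sum_univ_eq_sum_range (fun k =>
          (if k ≤ (i:ℕ) then ((-1 : ℚ) ^ ((i:ℕ) + k) * Nat.factorial i / Nat.factorial k) else 0) *
          (if k ≤ (j:ℕ) + 1 then (1 : ℚ) / (Nat.factorial ((j:ℕ) + 1 - k)) else 0)) K]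
      rfl
    rw [step1, mul_entry K i j i.isLt j.isLt]
  -- L * T is upper triangular
  have htri : (L * T).BlockTriangular id := by
    intro i j hij
    simp only [id] at hij
    rw [hmul i j]
    have hmin : min (i : ℕ) ((j : ℕ) + 1) = (j : ℕ) + 1 := by
      have : (j : ℕ) < (i : ℕ) := hij
      omega
    rw [hmin, Nat.choose_succ_self]
    simp
  -- L is lower triangular with diagonal 1
  have hLtri : L.BlockTriangular OrderDual.toDual := by
    intro i j hij
    have : (i : ℕ) < (j : ℕ) := hij
    simp only [hL, Matrix.of_apply]
    rw [if_neg (by omega)]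
  have hdetL : L.det = 1 := by
    rw [Matrix.det_of_lowerTriangular L hLtri]
    apply Finset.prod_eq_one
    intro i _
    simp only [hL, Matrix.of_apply, if_pos le_rfl]
    rw [← two_mul, pow_mul]
    have : ((Nat.factorial i : ℚ)) ≠ 0 := by positivity
    field_simp
    exact one_pow _
  have hdetLT : (L * T).det = T.det := by
    rw [Matrix.det_mul, hdetL, one_mul]
  rw [← hdetLT, Matrix.det_of_upperTriangular htri]
  have hdiag : ∀ i : Fin K, (L * T) i i = 1 / ((i : ℕ) + 1) := by
    intro i
    rw [hmul i i]
    have hmin : min (i : ℕ) ((i : ℕ) + 1) = (i : ℕ) := by omega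
    rw [hmin, Nat.choose_self, ← two_mul, pow_mul]
    have h1 : ((Nat.factorial i : ℚ)) ≠ 0 := by positivity
    have h2 : ((Nat.factorial ((i:ℕ) + 1) : ℚ)) ≠ 0 := by positivity
    rw [Nat.factorial_succ]
    push_cast
    field_simp
    ring
  calc ∏ i : Fin K, (L * T) i i = ∏ i : Fin K, (1 / ((i : ℕ) + 1) : ℚ) := by
        exact Finset.prod_congr rfl fun i _ => hdiag i
    _ = 1 / (Nat.factorial K) := by
        rw [Fin.prod_univ_eq_prod_range (fun n => (1 / ((n : ℕ) + 1) : ℚ))]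
        exact prod_inv_factorial K
end

section
/- The signed sum over permutations σ of {1,...,K} satisfying σ(j) ≤ j+1 for all j, of sgn(σ) divided by the product over j of (j+1-σ(j))!, equals 1/K!. -/
open Finset Matrix

private lemma prod_succ_eq_factorial (K : ℕ) :
    ∏ a : Fin K, (((a : ℕ) + 1 : ℕ) : ℚ) = (Nat.factorial K : ℚ) := by
  induction K with
  | zero => simp
  | succ n ih =>
    rw [Fin.prod_univ_castSucc]
    simp only [Fin.coe_castSucc, Fin.val_last, ih, Nat.factorial_succ]
    push_cast
    ring

theorem signed_perm_sum_eq_inv_factorial (K : ℕ) (hK : 0 < K) :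
    ∑ σ ∈ Finset.univ.filter
        (fun σ : Equiv.Perm (Fin K) => ∀ j : Fin K, (σ j : ℕ) ≤ (j : ℕ) + 1),
      ((Equiv.Perm.sign σ : ℤ) : ℚ) /
        ∏ j : Fin K, (Nat.factorial ((j : ℕ) + 1 - (σ j : ℕ)) : ℚ) =
      1 / (Nat.factorial K) := by
  classical
  set M : Matrix (Fin K) (Fin K) ℚ := fun a b =>
    if (a : ℕ) ≤ (b : ℕ) + 1 then ((Nat.factorial ((b : ℕ) + 1 - (a : ℕ)) : ℚ))⁻¹ else 0
    with hMdef
  -- Step 1: the sum equals det M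
  have h1 : (∑ σ ∈ Finset.univ.filter
        (fun σ : Equiv.Perm (Fin K) => ∀ j : Fin K, (σ j : ℕ) ≤ (j : ℕ) + 1),
      ((Equiv.Perm.sign σ : ℤ) : ℚ) /
        ∏ j : Fin K, (Nat.factorial ((j : ℕ) + 1 - (σ j : ℕ)) : ℚ)) = M.det := by
    rw [Matrix.det_apply']
    rw [← Finset.sum_filter_add_sum_filter_not Finset.univ
      (fun σ : Equiv.Perm (Fin K) => ∀ j : Fin K, (σ j : ℕ) ≤ (j : ℕ) + 1)]
    have hz : ∑ σ ∈ Finset.univ.filter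
        (fun σ : Equiv.Perm (Fin K) => ¬ ∀ j : Fin K, (σ j : ℕ) ≤ (j : ℕ) + 1),
        ((Equiv.Perm.sign σ : ℤ) : ℚ) * ∏ i, M (σ i) i = 0 := by
      apply Finset.sum_eq_zero
      intro σ hσ
      simp only [Finset.mem_filter, not_forall] at hσ
      obtain ⟨j, hj⟩ := hσ.2
      have : M (σ j) j = 0 := by
        simp only [hMdef]
        rw [if_neg (by omega)]
      exact mul_eq_zero_of_right _ (Finset.prod_eq_zero (Finset.mem_univ j) this)
    rw [hz, add_zero]
    apply Finset.sum_congr rfl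
    intro σ hσ
    simp only [Finset.mem_filter] at hσ
    have : ∏ i, M (σ i) i = (∏ j : Fin K, (Nat.factorial ((j : ℕ) + 1 - (σ j : ℕ)) : ℚ))⁻¹ := by
      rw [← Finset.prod_inv_distrib]
      apply Finset.prod_congr rfl
      intro i _
      simp only [hMdef]
      rw [if_pos (hσ.2 i)]
    rw [this, div_eq_mul_inv]
  rw [h1]
  -- Step 2: factor M
  set Dr : Matrix (Fin K) (Fin K) ℚ :=
    Matrix.diagonal (fun a : Fin K => (Nat.factorial (a : ℕ) : ℚ)) with hDr
  set Dc : Matrix (Fin K) (Fin K) ℚ :=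
    Matrix.diagonal (fun b : Fin K => ((Nat.factorial ((b : ℕ) + 1) : ℚ))⁻¹) with hDc
  set X : Matrix (Fin K) (Fin K) ℚ := fun a k =>
    (if (a : ℕ) = (k : ℕ) then 1 else 0) + (if (a : ℕ) = (k : ℕ) + 1 then 1 else 0) with hX
  set L : Matrix (Fin K) (Fin K) ℚ := fun k b => (Nat.choose (b : ℕ) (k : ℕ) : ℚ) with hL
  have hXL : ∀ a b : Fin K, (X * L) a b = (Nat.choose ((b : ℕ) + 1) (a : ℕ) : ℚ) := by
    intro a b
    rw [Matrix.mul_apply]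
    simp only [hX, hL, add_mul, ite_mul, one_mul, zero_mul]
    rw [Finset.sum_add_distrib]
    have e1 : (∑ k : Fin K, if (a : ℕ) = (k : ℕ) then (Nat.choose (b : ℕ) (k : ℕ) : ℚ) else 0)
        = (Nat.choose (b : ℕ) (a : ℕ) : ℚ) := by
      rw [Finset.sum_eq_single a]
      · simp
      · intro k _ hk
        rw [if_neg (fun h => hk (Fin.ext (by omega)))]
      · simp
    rw [e1]
    rcases Nat.eq_zero_or_pos (a : ℕ) with ha | ha
    · have e2 : (∑ k : Fin K, if (a : ℕ) = (k : ℕ) + 1 then (Nat.choose (b : ℕ) (k : ℕ) : ℚ) else 0) = 0 := by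
        apply Finset.sum_eq_zero
        intro k _
        rw [if_neg (by omega)]
      rw [e2, ha]
      simp
    · obtain ⟨a', ha'⟩ := Nat.exists_eq_add_of_lt ha
      have ha'2 : (a : ℕ) = a' + 1 := by omega
      have ha'K : a' < K := by have := a.isLt; omega
      have e2 : (∑ k : Fin K, if (a : ℕ) = (k : ℕ) + 1 then (Nat.choose (b : ℕ) (k : ℕ) : ℚ) else 0)
          = (Nat.choose (b : ℕ) a' : ℚ) := by
        rw [Finset.sum_eq_single (⟨a', ha'K⟩ : Fin K)]
        · rw [if_pos (by simp [ha'2])]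
        · intro k _ hk
          rw [if_neg (fun h => hk (Fin.ext (by simp; omega)))]
        · simp
      rw [e2, ha'2, Nat.choose_succ_succ']
      push_cast
      ring
  have hfact : M = Dr * (X * L) * Dc := by
    ext a b
    rw [hDr, hDc, Matrix.mul_diagonal, Matrix.diagonal_mul, hXL a b]
    simp only [hMdef]
    by_cases hab : (a : ℕ) ≤ (b : ℕ) + 1
    · rw [if_pos hab]
      have key := Nat.choose_mul_factorial_mul_factorial hab
      have h1 : (Nat.factorial ((b : ℕ) + 1 - (a : ℕ)) : ℚ) ≠ 0 := by
        exact_mod_cast Nat.factorial_ne_zero _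
      have h2 : (Nat.factorial ((b : ℕ) + 1) : ℚ) ≠ 0 := by
        exact_mod_cast Nat.factorial_ne_zero _
      have keyQ : ((Nat.choose ((b:ℕ)+1) (a:ℕ) : ℚ)) * (Nat.factorial (a:ℕ) : ℚ) *
          (Nat.factorial ((b:ℕ)+1-(a:ℕ)) : ℚ) = (Nat.factorial ((b:ℕ)+1) : ℚ) := by
        exact_mod_cast congrArg (Nat.cast : ℕ → ℚ) key
      field_simp
      rw [← keyQ]
      ring
    · rw [if_neg hab, Nat.choose_eq_zero_of_lt (by omega)]
      simp
  rw [hfact, Matrix.det_mul, Matrix.det_mul]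
  have hdetX : X.det = 1 := by
    rw [Matrix.det_of_lowerTriangular X (by
      intro i j hij
      simp only [hX]
      have : (i : ℕ) < (j : ℕ) := hij
      rw [if_neg (by omega), if_neg (by omega), add_zero])]
    have : ∀ i : Fin K, X i i = 1 := fun i => by simp [hX]
    simp [this]
  have hdetL : L.det = 1 := by
    rw [Matrix.det_of_upperTriangular (by
      intro i j hij
      simp only [hL]
      have : (j : ℕ) < (i : ℕ) := hij
      rw [Nat.choose_eq_zero_of_lt this]
      simp)]
    simp [hL]
  rw [Matrix.det_mul, hdetX, hdetL]
  simp only [hDr, hDc, Matrix.det_diagonal, mul_one, one_mul]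
  rw [Finset.prod_inv_distrib]
  have h2 : (∏ b : Fin K, ((Nat.factorial ((b : ℕ) + 1) : ℚ)))
      = (∏ a : Fin K, ((Nat.factorial (a : ℕ) : ℚ))) * (Nat.factorial K : ℚ) := by
    have : ∀ b : Fin K, ((Nat.factorial ((b : ℕ) + 1) : ℚ))
        = ((Nat.factorial (b : ℕ) : ℚ)) * (((b : ℕ) + 1 : ℕ) : ℚ) := by
      intro b
      rw [Nat.factorial_succ]
      push_cast
      ring
    simp_rw [this]
    rw [Finset.prod_mul_distrib, prod_succ_eq_factorial]
  rw [h2]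
  have h3 : (∏ a : Fin K, ((Nat.factorial (a : ℕ) : ℚ))) ≠ 0 := by
    apply Finset.prod_ne_zero_iff.mpr
    intro a _
    exact_mod_cast Nat.factorial_ne_zero _
  have h4 : (Nat.factorial K : ℚ) ≠ 0 := by exact_mod_cast Nat.factorial_ne_zero _
  field_simp
end
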